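/- arXiv:2106.08441 — 2 statements merged into one kernel-verified Lean document; each statement's English description precedes it below -/
import Mathlib

section
/- Let G = (V, E) be a directed graph on K vertices in which every vertex has a self-loop, let D be a dominating set for G (for every vertex i there exists j in D with an edge j -> i), and let p_1, ..., p_K be a probability distribution over V such that p_i >= beta > 0 for every i in D. Then sum_{i=1}^K p_i / ( sum over j with edge j -> i of p_j ) <= 2*alpha(G) * ln( 1 + ( ceil( K^2/(beta*|D|) ) + K ) / alpha(G) ) + 2*|D|, where alpha(G) is the independence number of G. -/
open Real Finset

section Aux

variable {K : ℕ} (Edge : Fin K → Fin K → Bool) (p : Fin K → ℝ)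

/-- Weighted Caro–Wei: greedy construction of an independent set bounding `∑ p u / p(N[u])`. -/
lemma caroWei (hself : ∀ i, Edge i i = true) :
    ∀ (n : ℕ) (U : Finset (Fin K)), U.card ≤ n → (∀ u ∈ U, 0 < p u) →
    ∃ S : Finset (Fin K), S ⊆ U ∧
      (∀ i ∈ S, ∀ j ∈ S, i ≠ j → Edge i j = false ∧ Edge j i = false) ∧
      ∑ u ∈ U, p u / (∑ j ∈ U.filter (fun j => Edge j u = true ∨ Edge u j = true), p j)
        ≤ (S.card : ℝ) := by
  intro n
  induction n with
  | zero =>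
    intro U hcard _
    have : U = ∅ := Finset.card_eq_zero.mp (Nat.le_zero.mp hcard)
    subst this
    exact ⟨∅, Finset.Subset.refl _, by simp, by simp⟩
  | succ n ih =>
    intro U hcard hpos
    rcases U.eq_empty_or_nonempty with rfl | hne
    · exact ⟨∅, Finset.Subset.refl _, by simp, by simp⟩
    obtain ⟨v, hvU, hvmin⟩ := U.exists_min_image
      (fun v => ∑ j ∈ U.filter (fun j => Edge j v = true ∨ Edge v j = true), p j) hne
    set den : Fin K → ℝ :=
      fun u => ∑ j ∈ U.filter (fun j => Edge j u = true ∨ Edge u j = true), p j with hden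
    have hdenpos : ∀ u ∈ U, 0 < den u := by
      intro u hu
      have humem : u ∈ U.filter (fun j => Edge j u = true ∨ Edge u j = true) :=
        Finset.mem_filter.mpr ⟨hu, Or.inl (hself u)⟩
      have h1 : p u ≤ den u := Finset.single_le_sum
        (fun j hj => (hpos j (Finset.mem_filter.mp hj).1).le) humem
      exact lt_of_lt_of_le (hpos u hu) h1
    -- split U by proximity to v
    set P : Fin K → Prop := fun u => Edge u v = true ∨ Edge v u = true with hP
    have hsplit := Finset.sum_filter_add_sum_filter_not U P (fun u => p u / den u)
    set U' := U.filter (fun u => ¬ P u) with hU'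
    have hU'sub : U' ⊆ U := Finset.filter_subset _ _
    have hU'card : U'.card ≤ n := by
      have : U' ⊂ U := Finset.filter_ssubset.mpr ⟨v, hvU, by simp [hP, hself v]⟩
      have := Finset.card_lt_card this
      omega
    obtain ⟨S', hS'U', hS'ind, hS'sum⟩ := ih U' hU'card (fun u hu => hpos u (hU'sub hu))
    -- the neighbourhood part sums to at most 1
    have hNsum : ∑ u ∈ U.filter P, p u / den u ≤ 1 := by
      have hdv : 0 < den v := hdenpos v hvU
      have h1 : ∑ u ∈ U.filter P, p u / den u ≤ ∑ u ∈ U.filter P, p u / den v := by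
        apply Finset.sum_le_sum
        intro u hu
        have huU : u ∈ U := (Finset.mem_filter.mp hu).1
        exact div_le_div_of_nonneg_left (hpos u huU).le hdv (hvmin u huU)
      have h2 : ∑ u ∈ U.filter P, p u = den v := rfl
      calc ∑ u ∈ U.filter P, p u / den u ≤ ∑ u ∈ U.filter P, p u / den v := h1
        _ = (∑ u ∈ U.filter P, p u) / den v := by rw [Finset.sum_div]
        _ = 1 := by rw [h2, div_self (ne_of_gt hdv)]
    -- the rest is bounded via the restricted denominators
    have hrest : ∑ u ∈ U', p u / den u ≤ (S'.card : ℝ) := by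
      refine le_trans ?_ hS'sum
      apply Finset.sum_le_sum
      intro u hu
      have huU : u ∈ U := hU'sub hu
      have hsub : U'.filter (fun j => Edge j u = true ∨ Edge u j = true) ⊆
          U.filter (fun j => Edge j u = true ∨ Edge u j = true) :=
        Finset.filter_subset_filter _ hU'sub
      have hle : ∑ j ∈ U'.filter (fun j => Edge j u = true ∨ Edge u j = true), p j ≤ den u :=
        Finset.sum_le_sum_of_subset_of_nonneg hsub
          (fun j hj _ => (hpos j (Finset.mem_filter.mp hj).1).le)
      have hpos' : 0 < ∑ j ∈ U'.filter (fun j => Edge j u = true ∨ Edge u j = true), p j := by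
        have humem : u ∈ U'.filter (fun j => Edge j u = true ∨ Edge u j = true) :=
          Finset.mem_filter.mpr ⟨hu, Or.inl (hself u)⟩
        exact lt_of_lt_of_le (hpos u huU) (Finset.single_le_sum
          (fun j hj => (hpos j (hU'sub (Finset.mem_filter.mp hj).1)).le) humem)
      exact div_le_div_of_nonneg_left (hpos u huU).le hpos' hle
    -- assemble
    have hvS' : v ∉ S' := by
      intro hv
      have := hS'U' hv
      rw [hU', Finset.mem_filter] at this
      exact this.2 (Or.inl (hself v))
    refine ⟨insert v S', ?_, ?_, ?_⟩
    · intro x hx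
      rcases Finset.mem_insert.mp hx with rfl | hx
      · exact hvU
      · exact hU'sub (hS'U' hx)
    · intro i hi j hj hij
      rcases Finset.mem_insert.mp hi with rfl | hi' <;>
        rcases Finset.mem_insert.mp hj with rfl | hj'
      · exact absurd rfl hij
      · have := hS'U' hj'
        rw [hU', Finset.mem_filter] at this
        have h := this.2
        simp only [hP, not_or, Bool.not_eq_true] at h
        exact ⟨h.2, h.1⟩
      · have := hS'U' hi'
        rw [hU', Finset.mem_filter] at this
        have h := this.2
        simp only [hP, not_or, Bool.not_eq_true] at h
        exact ⟨h.1, h.2⟩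
      · exact hS'ind i hi' j hj' hij
    · rw [Finset.card_insert_of_notMem hvS']
      push_cast
      calc ∑ u ∈ U, p u / den u
          = ∑ u ∈ U.filter P, p u / den u + ∑ u ∈ U', p u / den u := hsplit.symm
        _ ≤ 1 + (S'.card : ℝ) := add_le_add hNsum hrest
        _ = (S'.card : ℝ) + 1 := by ring

/-- Weighted Turán-type consequence: some vertex has large in-weight. -/
lemma turanStep (hself : ∀ i, Edge i i = true) (α : ℕ)
    (hub : ∀ S : Finset (Fin K),
      (∀ i ∈ S, ∀ j ∈ S, i ≠ j → Edge i j = false ∧ Edge j i = false) → S.card ≤ α)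
    (U : Finset (Fin K)) (hne : U.Nonempty) (hpos : ∀ u ∈ U, 0 < p u) :
    ∃ u ∈ U, (∑ j ∈ U, p j)
      ≤ 2 * (α : ℝ) * ∑ j ∈ U.filter (fun j => Edge j u = true), p j := by
  set den : Fin K → ℝ :=
    fun u => ∑ j ∈ U.filter (fun j => Edge j u = true ∨ Edge u j = true), p j with hden
  set pw : Fin K → ℝ :=
    fun u => ∑ j ∈ U.filter (fun j => Edge j u = true), p j with hpw
  set q : ℝ := ∑ j ∈ U, p j with hq
  have hq0 : 0 < q := Finset.sum_pos hpos hne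
  have hdenpos : ∀ u ∈ U, 0 < den u := by
    intro u hu
    have humem : u ∈ U.filter (fun j => Edge j u = true ∨ Edge u j = true) :=
      Finset.mem_filter.mpr ⟨hu, Or.inl (hself u)⟩
    exact lt_of_lt_of_le (hpos u hu) (Finset.single_le_sum
      (fun j hj => (hpos j (Finset.mem_filter.mp hj).1).le) humem)
  -- Caro-Wei bound
  obtain ⟨S, _, hSind, hCW⟩ := caroWei Edge p hself U.card U le_rfl hpos
  have hCWα : ∑ u ∈ U, p u / den u ≤ (α : ℝ) :=
    hCW.trans (by exact_mod_cast hub S hSind)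
  -- Cauchy-Schwarz
  have hCS : q ^ 2 ≤ (∑ u ∈ U, p u / den u) * ∑ u ∈ U, p u * den u := by
    apply Finset.sum_sq_le_sum_mul_sum_of_sq_eq_mul U
    · intro u hu; exact div_nonneg (hpos u hu).le (hdenpos u hu).le
    · intro u hu; exact mul_nonneg (hpos u hu).le (hdenpos u hu).le
    · intro u hu
      have hne' : den u ≠ 0 := (hdenpos u hu).ne'
      field_simp
  -- symmetrization
  have hsym : ∑ u ∈ U, p u * den u ≤ 2 * ∑ u ∈ U, p u * pw u := by
    have hrw : ∀ (f : Fin K → Fin K → Prop) [∀ u j, Decidable (f u j)],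
        ∑ u ∈ U, p u * (∑ j ∈ U.filter (fun j => f u j), p j)
          = ∑ u ∈ U, ∑ j ∈ U, if f u j then p u * p j else 0 := by
      intro f _
      apply Finset.sum_congr rfl
      intro u _
      rw [Finset.mul_sum, Finset.sum_filter]
    have h1 : ∑ u ∈ U, p u * den u
        = ∑ u ∈ U, ∑ j ∈ U, if (Edge j u = true ∨ Edge u j = true) then p u * p j else 0 :=
      hrw (fun u j => Edge j u = true ∨ Edge u j = true)
    have h2 : ∑ u ∈ U, p u * pw u
        = ∑ u ∈ U, ∑ j ∈ U, if (Edge j u = true) then p u * p j else 0 :=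
      hrw (fun u j => Edge j u = true)
    have h3 : ∑ u ∈ U, ∑ j ∈ U, (if (Edge u j = true) then p u * p j else 0)
        = ∑ u ∈ U, ∑ j ∈ U, if (Edge j u = true) then p u * p j else 0 := by
      rw [Finset.sum_comm]
      apply Finset.sum_congr rfl; intro u _
      apply Finset.sum_congr rfl; intro j _
      by_cases h : Edge j u = true <;> simp [h, mul_comm]
    rw [h1, h2]
    have hpt : ∀ u ∈ U, ∀ j ∈ U,
        (if (Edge j u = true ∨ Edge u j = true) then p u * p j else 0)
          ≤ (if (Edge j u = true) then p u * p j else 0)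
            + (if (Edge u j = true) then p u * p j else 0) := by
      intro u hu j hj
      have hnn : 0 ≤ p u * p j := mul_nonneg (hpos u hu).le (hpos j hj).le
      by_cases h1 : Edge j u = true <;> by_cases h2 : Edge u j = true <;>
        simp [h1, h2] <;> linarith [hnn]
    calc ∑ u ∈ U, ∑ j ∈ U, (if (Edge j u = true ∨ Edge u j = true) then p u * p j else 0)
        ≤ ∑ u ∈ U, ∑ j ∈ U, ((if (Edge j u = true) then p u * p j else 0)
            + (if (Edge u j = true) then p u * p j else 0)) := by
          apply Finset.sum_le_sum; intro u hu
          apply Finset.sum_le_sum; intro j hj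
          exact hpt u hu j hj
      _ = ∑ u ∈ U, ∑ j ∈ U, (if (Edge j u = true) then p u * p j else 0)
          + ∑ u ∈ U, ∑ j ∈ U, (if (Edge u j = true) then p u * p j else 0) := by
          rw [← Finset.sum_add_distrib]
          apply Finset.sum_congr rfl; intros
          rw [← Finset.sum_add_distrib]
      _ = 2 * ∑ u ∈ U, ∑ j ∈ U, (if (Edge j u = true) then p u * p j else 0) := by
          rw [h3]; ring
  -- max of pw
  obtain ⟨u, huU, humax⟩ := U.exists_max_image pw hne
  have hmax : ∑ u' ∈ U, p u' * pw u' ≤ q * pw u := by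
    calc ∑ u' ∈ U, p u' * pw u' ≤ ∑ u' ∈ U, p u' * pw u := by
          apply Finset.sum_le_sum; intro u' hu'
          exact mul_le_mul_of_nonneg_left (humax u' hu') (hpos u' hu').le
      _ = q * pw u := by rw [← Finset.sum_mul]
  refine ⟨u, huU, ?_⟩
  have hfinal : q ^ 2 ≤ (α : ℝ) * (2 * (q * pw u)) := by
    calc q ^ 2 ≤ (∑ u ∈ U, p u / den u) * ∑ u ∈ U, p u * den u := hCS
      _ ≤ (α : ℝ) * ∑ u ∈ U, p u * den u := by
          apply mul_le_mul_of_nonneg_right hCWα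
          exact Finset.sum_nonneg fun u hu => mul_nonneg (hpos u hu).le (hdenpos u hu).le
      _ ≤ (α : ℝ) * (2 * ∑ u' ∈ U, p u' * pw u') := by
          apply mul_le_mul_of_nonneg_left _ (Nat.cast_nonneg α)
          linarith [hsym]
      _ ≤ (α : ℝ) * (2 * (q * pw u)) := by
          apply mul_le_mul_of_nonneg_left _ (Nat.cast_nonneg α)
          linarith [hmax]
  nlinarith [hq0]

end Aux

set_option maxHeartbeats 2000000 in
/-- Let `G` be a directed graph on `K` vertices with all self-loops, `D` a dominating set
(every vertex has an in-edge from `D`), and `p` a probability distribution with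
`p i ≥ β > 0` for every `i ∈ D`.  Then
`∑ i, p i / (∑_{j : j → i} p j)
  ≤ 2*α(G) * ln (1 + (⌈K²/(β*|D|)⌉ + K)/α(G)) + 2*|D|`,
where `α(G)` is the independence number of `G` (no edge in either direction between two
distinct vertices of an independent set). -/
theorem dominating_set_ratio_bound
    (K : ℕ) (hK : 1 ≤ K) (Edge : Fin K → Fin K → Bool)
    (hself : ∀ i, Edge i i = true)
    (D : Finset (Fin K)) (hdom : ∀ i, ∃ j ∈ D, Edge j i = true)
    (p : Fin K → ℝ) (hp0 : ∀ i, 0 ≤ p i) (hp1 : ∑ i, p i = 1)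
    (β : ℝ) (hβ : 0 < β) (hpD : ∀ i ∈ D, β ≤ p i)
    (α : ℕ)
    (hα : IsGreatest {m : ℕ | ∃ S : Finset (Fin K),
      (∀ i ∈ S, ∀ j ∈ S, i ≠ j → Edge i j = false ∧ Edge j i = false) ∧ S.card = m} α) :
    ∑ i, p i / (∑ j ∈ Finset.univ.filter (fun j => Edge j i = true), p j)
      ≤ 2 * (α : ℝ) * Real.log (1 + ((⌈(K : ℝ) ^ 2 / (β * (D.card : ℝ))⌉₊ : ℝ) + (K : ℝ)) / (α : ℝ))
        + 2 * (D.card : ℝ) := by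
  classical
  set W : Fin K → ℝ := fun i => ∑ j ∈ Finset.univ.filter (fun j => Edge j i = true), p j with hW
  -- basic facts
  have hub : ∀ S : Finset (Fin K),
      (∀ i ∈ S, ∀ j ∈ S, i ≠ j → Edge i j = false ∧ Edge j i = false) → S.card ≤ α :=
    fun S h => hα.2 ⟨S, h, rfl⟩
  have hα1 : 1 ≤ α := by
    apply hα.2
    exact ⟨{⟨0, hK⟩}, by
      intro i hi j hj hij
      rw [Finset.mem_singleton] at hi hj
      exact absurd (hi.trans hj.symm) hij, Finset.card_singleton _⟩
  have hαK : α ≤ K := by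
    obtain ⟨S, _, hcard⟩ := hα.1
    rw [← hcard]
    simpa using Finset.card_le_univ S
  have hα0 : (0 : ℝ) < (α : ℝ) := by exact_mod_cast hα1
  have hD1 : 1 ≤ D.card := by
    obtain ⟨j, hj, _⟩ := hdom ⟨0, hK⟩
    exact Finset.card_pos.mpr ⟨j, hj⟩
  have hDpos : (0 : ℝ) < (D.card : ℝ) := by exact_mod_cast hD1
  set c : ℝ := β * (D.card : ℝ) with hc
  have hc0 : 0 < c := mul_pos hβ hDpos
  have hWβ : ∀ i, β ≤ W i := by
    intro i
    obtain ⟨j, hjD, hji⟩ := hdom i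
    have hjmem : j ∈ Finset.univ.filter (fun j => Edge j i = true) :=
      Finset.mem_filter.mpr ⟨Finset.mem_univ j, hji⟩
    calc β ≤ p j := hpD j hjD
      _ ≤ W i := Finset.single_le_sum (fun k _ => hp0 k) hjmem
  have hWpos : ∀ i, 0 < W i := fun i => lt_of_lt_of_le hβ (hWβ i)
  -- main induction
  have main : ∀ (n : ℕ) (U : Finset (Fin K)), U.card ≤ n → (∀ u ∈ U, 0 < p u) →
      ∑ u ∈ U, p u / W u ≤
        if (∑ u ∈ U, p u) ≤ c then (∑ u ∈ U, p u) / β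
        else 2 * (α : ℝ) * Real.log ((∑ u ∈ U, p u) / c) + 1 + c / β := by
    intro n
    induction n with
    | zero =>
      intro U hcard _
      have : U = ∅ := Finset.card_eq_zero.mp (Nat.le_zero.mp hcard)
      subst this
      simp [hc0.le]
    | succ n ih =>
      intro U hcard hpos
      rcases U.eq_empty_or_nonempty with rfl | hne
      · simp [hc0.le]
      obtain ⟨u, huU, hqle⟩ := turanStep Edge p hself α hub U hne hpos
      set q : ℝ := ∑ j ∈ U, p j with hqdef
      have hq0 : 0 < q := Finset.sum_pos hpos hne
      set U' := U.erase u with hU'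
      have hcard' : U'.card ≤ n := by
        have := Finset.card_erase_of_mem huU
        have h2 := Finset.card_pos.mpr hne
        rw [hU', this]
        omega
      have hpos' : ∀ v ∈ U', 0 < p v := fun v hv => hpos v (Finset.mem_of_mem_erase hv)
      have IH := ih U' hcard' hpos'
      set q' : ℝ := ∑ j ∈ U', p j with hq'def
      have hsum : ∑ j ∈ U', p j + p u = ∑ j ∈ U, p j := Finset.sum_erase_add U p huU
      have hqq' : q = q' + p u := by rw [hqdef, hq'def, ← hsum]
      have hq'0 : 0 ≤ q' := Finset.sum_nonneg fun j hj => (hpos' j hj).le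
      have hpu : 0 < p u := hpos u huU
      -- bounds on the single term t = p u / W u
      have hWu : 0 < W u := hWpos u
      have hpuW : p u ≤ W u := by
        have humem : u ∈ Finset.univ.filter (fun j => Edge j u = true) :=
          Finset.mem_filter.mpr ⟨Finset.mem_univ u, hself u⟩
        exact Finset.single_le_sum (fun k _ => hp0 k) humem
      have ht1 : p u / W u ≤ 1 := (div_le_one hWu).mpr hpuW
      have htβ : p u / W u ≤ p u / β := div_le_div_of_nonneg_left hpu.le hβ (hWβ u)
      have hqW : q ≤ 2 * (α : ℝ) * W u := by
        refine hqle.trans ?_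
        apply mul_le_mul_of_nonneg_left _ (by positivity)
        apply Finset.sum_le_sum_of_subset_of_nonneg
        · exact Finset.filter_subset_filter _ (Finset.subset_univ U)
        · intro j _ _; exact hp0 j
      have hsplitsum : ∑ v ∈ U, p v / W v = p u / W u + ∑ v ∈ U', p v / W v := by
        rw [hU', ← Finset.add_sum_erase U (fun v => p v / W v) huU]
      rw [hsplitsum]
      by_cases hqc : q ≤ c
      · have hq'c : q' ≤ c := by
          have : q' ≤ q := by rw [hqq']; linarith
          linarith
        rw [if_pos hqc]
        rw [if_pos hq'c] at IH
        have hqβ : q / β = q' / β + p u / β := by rw [hqq', add_div]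
        linarith [htβ, IH]
      · rw [if_neg hqc]
        push_neg at hqc
        by_cases hq'c : q' ≤ c
        · rw [if_pos hq'c] at IH
          have hlog0 : 0 ≤ Real.log (q / c) :=
            Real.log_nonneg ((one_le_div hc0).mpr hqc.le)
          have hq'β : q' / β ≤ c / β := div_le_div_of_nonneg_right hq'c hβ.le
          have : (0:ℝ) ≤ 2 * (α : ℝ) * Real.log (q / c) := by positivity
          linarith [IH, ht1, hq'β]
        · rw [if_neg hq'c] at IH
          push_neg at hq'c
          have hq'0' : 0 < q' := lt_trans hc0 hq'c
          -- key: p u / W u ≤ 2α (log (q/c) - log (q'/c))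
          have hlogdiff : Real.log (q / c) - Real.log (q' / c) = Real.log q - Real.log q' := by
            rw [Real.log_div (ne_of_gt hq0) (ne_of_gt hc0),
                Real.log_div (ne_of_gt hq'0') (ne_of_gt hc0)]
            ring
          have hlb : p u / q ≤ Real.log q - Real.log q' := by
            have h1 : Real.log (q' / q) ≤ q' / q - 1 :=
              Real.log_le_sub_one_of_pos (by positivity)
            rw [Real.log_div (ne_of_gt hq'0') (ne_of_gt hq0)] at h1
            have h2 : q' / q - 1 = -(p u / q) := by
              field_simp
              linarith [hqq']
            linarith [h1, h2.symm.le]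
          have htα : p u / W u ≤ 2 * (α : ℝ) * (p u / q) := by
            rw [div_le_iff₀ hWu]
            have h1 : p u * q ≤ p u * (2 * (α : ℝ) * W u) :=
              mul_le_mul_of_nonneg_left hqW hpu.le
            calc p u = (p u * q) / q := by field_simp
              _ ≤ (p u * (2 * (α : ℝ) * W u)) / q := by
                  exact div_le_div_of_nonneg_right h1 hq0.le
              _ = 2 * (α : ℝ) * (p u / q) * W u := by field_simp
          have hkey : p u / W u ≤ 2 * (α : ℝ) * (Real.log (q / c) - Real.log (q' / c)) := by
            rw [hlogdiff]
            calc p u / W u ≤ 2 * (α : ℝ) * (p u / q) := htα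
              _ ≤ 2 * (α : ℝ) * (Real.log q - Real.log q') := by
                  apply mul_le_mul_of_nonneg_left hlb (by positivity)
          nlinarith [IH, hkey]
  -- apply to the support
  set supp := Finset.univ.filter (fun i => 0 < p i) with hsupp
  have hsuppsum : ∑ i ∈ supp, p i = 1 := by
    rw [← hp1]
    symm
    rw [← Finset.sum_filter_add_sum_filter_not Finset.univ (fun i => 0 < p i) p]
    have : ∑ i ∈ Finset.univ.filter (fun i => ¬ 0 < p i), p i = 0 := by
      apply Finset.sum_eq_zero
      intro i hi
      have := (Finset.mem_filter.mp hi).2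
      linarith [hp0 i, not_lt.mp this]
    rw [hsupp, this, add_zero]
  have hLHS : ∑ i, p i / W i = ∑ i ∈ supp, p i / W i := by
    symm
    rw [← Finset.sum_filter_add_sum_filter_not Finset.univ (fun i => 0 < p i)
      (fun i => p i / W i)]
    have : ∑ i ∈ Finset.univ.filter (fun i => ¬ 0 < p i), p i / W i = 0 := by
      apply Finset.sum_eq_zero
      intro i hi
      have := (Finset.mem_filter.mp hi).2
      have : p i = 0 := le_antisymm (not_lt.mp this) (hp0 i)
      rw [this, zero_div]
    rw [hsupp, this, add_zero]
  have happlied := main supp.card supp le_rfl (fun u hu => (Finset.mem_filter.mp hu).2)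
  rw [hsuppsum] at happlied
  rw [hLHS]
  -- final arithmetic
  have hXnn : (0:ℝ) ≤ ((⌈(K : ℝ) ^ 2 / (β * (D.card : ℝ))⌉₊ : ℝ) + (K : ℝ)) / (α : ℝ) := by
    positivity
  have hL0 : 0 ≤ Real.log (1 + ((⌈(K : ℝ) ^ 2 / (β * (D.card : ℝ))⌉₊ : ℝ) + (K : ℝ)) / (α : ℝ)) :=
    Real.log_nonneg (by linarith)
  by_cases h1c : (1:ℝ) ≤ c
  · rw [if_pos h1c] at happlied
    have h1β : 1 / β ≤ (D.card : ℝ) := by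
      rw [div_le_iff₀ hβ]
      calc (1:ℝ) ≤ c := h1c
        _ = (D.card : ℝ) * β := by rw [hc]; ring
    have : (0:ℝ) ≤ 2 * (α : ℝ) * Real.log (1 + ((⌈(K : ℝ) ^ 2 / (β * (D.card : ℝ))⌉₊ : ℝ)
        + (K : ℝ)) / (α : ℝ)) := by positivity
    linarith [happlied, h1β, hDpos]
  · rw [if_neg h1c] at happlied
    push_neg at h1c
    have hcβ : c / β = (D.card : ℝ) := by
      rw [hc, mul_comm, mul_div_assoc, div_self hβ.ne', mul_one]
    -- log(1/c) ≤ log(1 + (⌈K²/c⌉ + K)/α)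
    have hceil : (K : ℝ) ^ 2 / c ≤ (⌈(K : ℝ) ^ 2 / (β * (D.card : ℝ))⌉₊ : ℝ) := by
      rw [hc]
      exact Nat.le_ceil _
    have hK1 : (1:ℝ) ≤ (K:ℝ) := by exact_mod_cast hK
    have hαKr : (α : ℝ) ≤ (K : ℝ) := by exact_mod_cast hαK
    have hlogarg : 1 / c ≤ 1 + ((⌈(K : ℝ) ^ 2 / (β * (D.card : ℝ))⌉₊ : ℝ) + (K : ℝ)) / (α : ℝ) := by
      have hKsq : (K : ℝ) ≤ (K : ℝ) ^ 2 := by nlinarith [hK1]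
      have hαK2 : (α : ℝ) ≤ (K : ℝ) ^ 2 := le_trans hαKr hKsq
      have h2 : 1 / c ≤ (K : ℝ) ^ 2 / (c * (α : ℝ)) := by
        rw [div_le_div_iff₀ hc0 (mul_pos hc0 hα0)]
        have hmono : c * (α : ℝ) ≤ c * (K : ℝ) ^ 2 :=
          mul_le_mul_of_nonneg_left hαK2 hc0.le
        linarith [hmono]
      have h3 : (K : ℝ) ^ 2 / (c * (α : ℝ)) = ((K : ℝ) ^ 2 / c) / (α : ℝ) := by
        rw [div_div]
      have h4 : ((K : ℝ) ^ 2 / c) / (α : ℝ)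
          ≤ ((⌈(K : ℝ) ^ 2 / (β * (D.card : ℝ))⌉₊ : ℝ) + (K : ℝ)) / (α : ℝ) := by
        apply div_le_div_of_nonneg_right _ hα0.le
        linarith [hceil, hK1]
      linarith [h2, h3.le, h3.ge, h4]
    have hlog : Real.log (1 / c)
        ≤ Real.log (1 + ((⌈(K : ℝ) ^ 2 / (β * (D.card : ℝ))⌉₊ : ℝ) + (K : ℝ)) / (α : ℝ)) :=
      Real.log_le_log (one_div_pos.mpr hc0) hlogarg
    have hmul : 2 * (α : ℝ) * Real.log (1 / c)
        ≤ 2 * (α : ℝ) * Real.log (1 + ((⌈(K : ℝ) ^ 2 / (β * (D.card : ℝ))⌉₊ : ℝ)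
          + (K : ℝ)) / (α : ℝ)) :=
      mul_le_mul_of_nonneg_left hlog (mul_nonneg (by norm_num) hα0.le)
    have hD2 : 1 + c / β ≤ 2 * (D.card : ℝ) := by
      rw [hcβ]
      have : (1:ℝ) ≤ (D.card : ℝ) := by exact_mod_cast hD1
      linarith
    linarith [happlied, hmul, hD2, hcβ.le, hDpos]
end

section
/- (Deterministic exponential-weights inequality.) Let K >= 2, eta in (0,1), T >= 1, and for t = 1,...,T and i = 1,...,K let hat_ell_t(i) >= 0 be arbitrary nonnegative numbers and let bar_F_{i,t} >= 0 satisfy sum_{i=1}^K bar_F_{i,t} = 1 for each t. Define weights w_{i,1} = 1 and w_{i,t+1} = w_{i,t} * exp(-eta * hat_ell_t(i)), W_t = sum_{i=1}^K w_{i,t}, and pi_{i,t} = (1-eta) * w_{i,t}/W_t + eta * bar_F_{i,t}. Then for every index i: sum_{t=1}^T sum_{j=1}^K pi_{j,t} * hat_ell_t(j) - sum_{t=1}^T hat_ell_t(i) <= (ln K)/eta + eta * sum_{t=1}^T sum_{j=1}^K bar_F_{j,t} * hat_ell_t(j) + (eta/2) * sum_{t=1}^T sum_{j=1}^K ( pi_{j,t}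 - eta * bar_F_{j,t} ) * hat_ell_t(j)^2. -/
open Real Finset

lemma ewi_sum_Icc_one (f : ℕ → ℝ) (T : ℕ) :
    ∑ t ∈ Finset.Icc 1 T, f t = ∑ t ∈ Finset.range T, f (t + 1) := by
  induction T with
  | zero => simp
  | succ n ih =>
    rw [Finset.sum_Icc_succ_top (Nat.succ_le_succ (Nat.zero_le n)), ih,
      Finset.sum_range_succ]

lemma ewi_exp_neg_le (x : ℝ) (hx : 0 ≤ x) :
    Real.exp (-x) ≤ 1 - x + x ^ 2 / 2 := by
  have h1 : 1 + x + x ^ 2 / 2 ≤ Real.exp x := by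
    have := Real.sum_le_exp_of_nonneg hx 3
    simp [Finset.sum_range_succ, Nat.factorial] at this
    nlinarith [this]
  have h2 : (0:ℝ) < 1 - x + x ^ 2 / 2 := by nlinarith [sq_nonneg (x - 1)]
  have h3 : 1 ≤ Real.exp x * (1 - x + x ^ 2 / 2) := by nlinarith [sq_nonneg x]
  rw [Real.exp_neg]
  rw [inv_le_iff_one_le_mul₀ (Real.exp_pos x)]
  nlinarith [h3]

/-- Deterministic exponential-weights inequality.  Let `K ≥ 2`, `η ∈ (0,1)`, `T ≥ 1`,
nonnegative loss estimates `ℓ̂ t i` and exploration coefficients `F̄ i t ≥ 0` with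
`∑ i, F̄ i t = 1`.  Define `w i 1 = 1`, `w i (t+1) = w i t * exp (-η * ℓ̂ t i)`,
`W t = ∑ i, w i t`, `π i t = (1-η) * w i t / W t + η * F̄ i t`.  Then for every `i`:
`∑ t ∑ j π j t * ℓ̂ t j - ∑ t ℓ̂ t i
  ≤ ln K / η + η * ∑ t ∑ j F̄ j t * ℓ̂ t j + (η/2) * ∑ t ∑ j (π j t - η * F̄ j t) * ℓ̂ t j ^ 2`. -/
theorem exponential_weights_inequality
    (K : ℕ) (hK : 2 ≤ K) (η : ℝ) (hη0 : 0 < η) (hη1 : η < 1) (T : ℕ) (hT : 1 ≤ T)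
    (ℓhat : ℕ → Fin K → ℝ) (hℓ : ∀ t i, 0 ≤ ℓhat t i)
    (Fbar : Fin K → ℕ → ℝ) (hFbar0 : ∀ i t, 0 ≤ Fbar i t)
    (hFbar1 : ∀ t, ∑ i, Fbar i t = 1)
    (w : Fin K → ℕ → ℝ) (hw1 : ∀ i, w i 1 = 1)
    (hwrec : ∀ i t, 1 ≤ t → w i (t + 1) = w i t * Real.exp (-η * ℓhat t i))
    (W : ℕ → ℝ) (hW : ∀ t, W t = ∑ i, w i t)
    (pi : Fin K → ℕ → ℝ) (hpi : ∀ i t, pi i t = (1 - η) * w i t / W t + η * Fbar i t) :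
    ∀ i : Fin K,
      ∑ t ∈ Finset.Icc 1 T, ∑ j, pi j t * ℓhat t j - ∑ t ∈ Finset.Icc 1 T, ℓhat t i
        ≤ Real.log K / η
          + η * ∑ t ∈ Finset.Icc 1 T, ∑ j, Fbar j t * ℓhat t j
          + (η / 2) * ∑ t ∈ Finset.Icc 1 T, ∑ j, (pi j t - η * Fbar j t) * ℓhat t j ^ 2 := by
  intro i
  have hKpos : (0:ℕ) < K := by omega
  haveI : NeZero K := ⟨by omega⟩
  -- positivity of weights
  have hwpos : ∀ t, 1 ≤ t → ∀ j, 0 < w j t := by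
    intro t ht
    induction t, ht using Nat.le_induction with
    | base => intro j; rw [hw1]; norm_num
    | succ t ht ih =>
      intro j; rw [hwrec j t ht]
      exact mul_pos (ih j) (Real.exp_pos _)
  have hWpos : ∀ t, 1 ≤ t → 0 < W t := by
    intro t ht
    rw [hW]
    exact Finset.sum_pos (fun j _ => hwpos t ht j) ⟨⟨0, hKpos⟩, Finset.mem_univ _⟩
  -- abbreviations
  set S1 : ℕ → ℝ := fun t => ∑ j, (w j t / W t) * ℓhat t j with hS1
  set S2 : ℕ → ℝ := fun t => ∑ j, (w j t / W t) * ℓhat t j ^ 2 with hS2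
  have hS1nn : ∀ t, 1 ≤ t → 0 ≤ S1 t := by
    intro t ht
    apply Finset.sum_nonneg
    intro j _
    exact mul_nonneg (div_nonneg (hwpos t ht j).le (hWpos t ht).le) (hℓ t j)
  have hS2nn : ∀ t, 1 ≤ t → 0 ≤ S2 t := by
    intro t ht
    apply Finset.sum_nonneg
    intro j _
    exact mul_nonneg (div_nonneg (hwpos t ht j).le (hWpos t ht).le) (sq_nonneg _)
  -- per-step inequality
  have hstep : ∀ t, 1 ≤ t →
      Real.log (W (t + 1)) - Real.log (W t) ≤ -η * S1 t + η ^ 2 / 2 * S2 t := by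
    intro t ht
    have hWt := hWpos t ht
    have hWt1 := hWpos (t + 1) (by omega)
    have hbound : W (t + 1) ≤ W t * (1 - η * S1 t + η ^ 2 / 2 * S2 t) := by
      have h1 : W (t + 1) = ∑ j, w j t * Real.exp (-η * ℓhat t j) := by
        rw [hW]; exact Finset.sum_congr rfl fun j _ => hwrec j t ht
      have h2 : ∀ j : Fin K, w j t * Real.exp (-η * ℓhat t j)
          ≤ w j t * (1 - η * ℓhat t j + (η * ℓhat t j) ^ 2 / 2) := by
        intro j
        apply mul_le_mul_of_nonneg_left _ (hwpos t ht j).le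
        have := ewi_exp_neg_le (η * ℓhat t j) (mul_nonneg hη0.le (hℓ t j))
        simpa [neg_mul] using this
      calc W (t + 1) = ∑ j, w j t * Real.exp (-η * ℓhat t j) := h1
        _ ≤ ∑ j, w j t * (1 - η * ℓhat t j + (η * ℓhat t j) ^ 2 / 2) :=
            Finset.sum_le_sum fun j _ => h2 j
        _ = W t * (1 - η * S1 t + η ^ 2 / 2 * S2 t) := by
            have e1 : W t * S1 t = ∑ j, w j t * ℓhat t j := by
              rw [hS1, Finset.mul_sum]
              exact Finset.sum_congr rfl fun j _ => by field_simp
            have e2 : W t * S2 t = ∑ j, w j t * ℓhat t j ^ 2 := by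
              rw [hS2, Finset.mul_sum]
              exact Finset.sum_congr rfl fun j _ => by field_simp
            have e3 : ∑ j, w j t * (1 - η * ℓhat t j + (η * ℓhat t j) ^ 2 / 2)
                = W t - η * (∑ j, w j t * ℓhat t j)
                  + η ^ 2 / 2 * (∑ j, w j t * ℓhat t j ^ 2) := by
              rw [hW, Finset.mul_sum, Finset.mul_sum, ← Finset.sum_sub_distrib,
                ← Finset.sum_add_distrib]
              exact Finset.sum_congr rfl fun j _ => by ring
            rw [e3, ← e1, ← e2]
            ring
    have hBpos : 0 < 1 - η * S1 t + η ^ 2 / 2 * S2 t := by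
      have := hbound
      nlinarith [hWt1, hWt]
    calc Real.log (W (t + 1)) - Real.log (W t)
        ≤ Real.log (W t * (1 - η * S1 t + η ^ 2 / 2 * S2 t)) - Real.log (W t) := by
          have := Real.log_le_log hWt1 hbound
          linarith
      _ = Real.log (1 - η * S1 t + η ^ 2 / 2 * S2 t) := by
          rw [Real.log_mul hWt.ne' hBpos.ne']; ring
      _ ≤ (1 - η * S1 t + η ^ 2 / 2 * S2 t) - 1 := Real.log_le_sub_one_of_pos hBpos
      _ = -η * S1 t + η ^ 2 / 2 * S2 t := by ring
  -- telescoping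
  have htel : Real.log (W (T + 1)) - Real.log (W 1)
      ≤ ∑ t ∈ Finset.Icc 1 T, (-η * S1 t + η ^ 2 / 2 * S2 t) := by
    have h1 : Real.log (W (T + 1)) - Real.log (W 1)
        = ∑ t ∈ Finset.range T, (Real.log (W (t + 1 + 1)) - Real.log (W (t + 1))) := by
      rw [Finset.sum_range_sub (fun n => Real.log (W (n + 1)))]
    rw [h1, ewi_sum_Icc_one]
    exact Finset.sum_le_sum fun t _ => hstep (t + 1) (by omega)
  -- value of w i (T+1)
  have hwval : ∀ n : ℕ, w i (n + 1) = Real.exp (-η * ∑ t ∈ Finset.Icc 1 n, ℓhat t i) := by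
    intro n
    induction n with
    | zero => simp [hw1]
    | succ n ih =>
      rw [hwrec i (n + 1) (by omega), ih,
        Finset.sum_Icc_succ_top (Nat.succ_le_succ (Nat.zero_le n)), ← Real.exp_add]
      ring_nf
  -- lower bound on log W(T+1)
  have hlow : -η * ∑ t ∈ Finset.Icc 1 T, ℓhat t i ≤ Real.log (W (T + 1)) := by
    have h1 : w i (T + 1) ≤ W (T + 1) := by
      rw [hW]
      exact Finset.single_le_sum (fun j _ => (hwpos (T + 1) (by omega) j).le)
        (Finset.mem_univ i)
    have h2 := Real.log_le_log (hwpos (T + 1) (by omega) i) h1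
    rwa [hwval T, Real.log_exp] at h2
  -- log W 1 = log K
  have hW1 : Real.log (W 1) = Real.log K := by
    rw [hW]
    simp [hw1]
  have hlogK : 0 ≤ Real.log K := by
    apply Real.log_nonneg
    exact_mod_cast Nat.one_le_iff_ne_zero.mpr (by omega)
  -- combined main bound
  set A : ℝ := ∑ t ∈ Finset.Icc 1 T, ℓhat t i with hA
  have hAnn : 0 ≤ A := Finset.sum_nonneg fun t _ => hℓ t i
  have hS1sum : ∑ t ∈ Finset.Icc 1 T, S1 t
      ≤ A + Real.log K / η + η / 2 * ∑ t ∈ Finset.Icc 1 T, S2 t := by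
    have h1 : -η * A - Real.log K
        ≤ -η * ∑ t ∈ Finset.Icc 1 T, S1 t + η ^ 2 / 2 * ∑ t ∈ Finset.Icc 1 T, S2 t := by
      have h2 := htel
      rw [hW1] at h2
      rw [Finset.sum_add_distrib, ← Finset.mul_sum, ← Finset.mul_sum] at h2
      linarith [hlow]
    have key : η * ∑ t ∈ Finset.Icc 1 T, S1 t
        ≤ η * A + Real.log K + η ^ 2 / 2 * ∑ t ∈ Finset.Icc 1 T, S2 t := by linarith
    rw [← mul_le_mul_iff_right₀ hη0]
    have hc : η * (Real.log K / η) = Real.log K := by field_simp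
    nlinarith [key, hc]
  have hS2sumnn : 0 ≤ ∑ t ∈ Finset.Icc 1 T, S2 t :=
    Finset.sum_nonneg fun t ht => hS2nn t (Finset.mem_Icc.mp ht).1
  -- rewrite the goal in terms of S1 and S2
  have hgoal1 : ∀ t, 1 ≤ t → ∑ j, pi j t * ℓhat t j
      = (1 - η) * S1 t + η * ∑ j, Fbar j t * ℓhat t j := by
    intro t ht
    rw [hS1, Finset.mul_sum, Finset.mul_sum, ← Finset.sum_add_distrib]
    apply Finset.sum_congr rfl
    intro j _
    rw [hpi]
    have := (hWpos t ht).ne'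
    field_simp
  have hgoal2 : ∀ t, 1 ≤ t → ∑ j, (pi j t - η * Fbar j t) * ℓhat t j ^ 2
      = (1 - η) * S2 t := by
    intro t ht
    rw [hS2, Finset.mul_sum]
    apply Finset.sum_congr rfl
    intro j _
    rw [hpi]
    have := (hWpos t ht).ne'
    field_simp
    ring
  have hmem : ∀ t ∈ Finset.Icc 1 T, 1 ≤ t := fun t ht => (Finset.mem_Icc.mp ht).1
  rw [Finset.sum_congr rfl (fun t ht => hgoal1 t (hmem t ht)),
    Finset.sum_congr rfl (fun t ht => hgoal2 t (hmem t ht)),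
    Finset.sum_add_distrib, ← Finset.mul_sum, ← Finset.mul_sum, ← Finset.mul_sum]
  set s1 : ℝ := ∑ t ∈ Finset.Icc 1 T, S1 t
  set s2 : ℝ := ∑ t ∈ Finset.Icc 1 T, S2 t
  set B : ℝ := ∑ t ∈ Finset.Icc 1 T, ∑ j, Fbar j t * ℓhat t j
  have hdiv : 0 ≤ Real.log K / η := div_nonneg hlogK hη0.le
  nlinarith [hS1sum, hS2sumnn, hAnn, mul_nonneg hη0.le hAnn,
    mul_nonneg (mul_nonneg hη0.le hη0.le) hS2sumnn,
    mul_nonneg hη0.le hdiv]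
end
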